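/- Let n ≥ 2 be an integer, b ∈ ℂ, and let w ∈ ℂ satisfy g_b^{∘h}(w) = w for some h ≥ 1. Then w is integral over the subring ℤ[b] of ℂ, and b is integral over the subring ℤ[w] of ℂ. -/

import Mathlib

open Polynomial

private def cseq (n : ℕ) : ℕ → ℕ
  | 0 => 0
  | k+1 => n * cseq n k + 1

private noncomputable def Qseq {R : Type*} [CommRing R] (n : ℕ) (b : R) : ℕ → R[X]
  | 0 => X
  | k+1 => (Qseq n b k) ^ n + C ((n : R) ^ (n * cseq n k) * b)

private noncomputable def Pseq {R : Type*} [CommRing R] (n : ℕ) (w : R) : ℕ → R[X]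
  | 0 => C w
  | k+1 => (Pseq n w k) ^ n + C ((n : R) ^ (n * cseq n k)) * X

private lemma Qseq_map {R S : Type*} [CommRing R] [CommRing S] (f : R →+* S)
    (n : ℕ) (b : R) (k : ℕ) : (Qseq n b k).map f = Qseq n (f b) k := by
  induction k with
  | zero => simp [Qseq]
  | succ k ih => simp [Qseq, Polynomial.map_add, Polynomial.map_pow, ih, map_mul, map_pow]

private lemma Pseq_map {R S : Type*} [CommRing R] [CommRing S] (f : R →+* S)
    (n : ℕ) (w : R) (k : ℕ) : (Pseq n w k).map f = Pseq n (f w) k := by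
  induction k with
  | zero => simp [Pseq]
  | succ k ih => simp [Pseq, Polynomial.map_add, Polynomial.map_pow, ih, map_pow]

private lemma Qseq_monic {R : Type*} [CommRing R] [Nontrivial R] (n : ℕ) (hn : 2 ≤ n)
    (b : R) (k : ℕ) : (Qseq n b k).Monic ∧ (Qseq n b k).degree = ((n ^ k : ℕ) : WithBot ℕ) := by
  induction k with
  | zero => simpa [Qseq] using ⟨monic_X, degree_X⟩
  | succ k ih =>
    obtain ⟨hm, hd⟩ := ih
    have hpow : ((Qseq n b k) ^ n).Monic := hm.pow n
    have hdeg : ((Qseq n b k) ^ n).degree = ((n ^ (k+1) : ℕ) : WithBot ℕ) := by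
      rw [degree_eq_natDegree hpow.ne_zero, hm.natDegree_pow]
      have : (Qseq n b k).natDegree = n ^ k := by
        have := degree_eq_natDegree hm.ne_zero
        rw [this] at hd
        exact_mod_cast hd
      rw [this, ← pow_succ']
    have hpos : (0 : WithBot ℕ) < ((Qseq n b k) ^ n).degree := by
      rw [hdeg]
      exact_mod_cast Nat.pow_pos (n := k+1) (by omega)
    have hlt : (C ((n : R) ^ (n * cseq n k) * b)).degree < ((Qseq n b k) ^ n).degree :=
      lt_of_le_of_lt degree_C_le hpos
    exact ⟨hpow.add_of_left hlt, by
      rw [Qseq, degree_add_eq_left_of_degree_lt hlt, hdeg]⟩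

private lemma Pseq_monic {R : Type*} [CommRing R] [Nontrivial R] (n : ℕ) (hn : 2 ≤ n)
    (w : R) (k : ℕ) :
    (Pseq n w (k+1)).Monic ∧ (Pseq n w (k+1)).degree = ((n ^ k : ℕ) : WithBot ℕ) := by
  induction k with
  | zero =>
    have h1 : Pseq n w 1 = X + C (w ^ n) := by
      show (C w) ^ n + C ((n : R) ^ (n * cseq n 0)) * X = _
      simp only [cseq, mul_zero, pow_zero, map_one, one_mul, ← C_pow]
      ring
    rw [h1]
    exact ⟨monic_X_add_C _, by simpa using degree_X_add_C (w ^ n)⟩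
  | succ k ih =>
    obtain ⟨hm, hd⟩ := ih
    have hpow : ((Pseq n w (k+1)) ^ n).Monic := hm.pow n
    have hdeg : ((Pseq n w (k+1)) ^ n).degree = ((n ^ (k+1) : ℕ) : WithBot ℕ) := by
      rw [degree_eq_natDegree hpow.ne_zero, hm.natDegree_pow]
      have : (Pseq n w (k+1)).natDegree = n ^ k := by
        have := degree_eq_natDegree hm.ne_zero
        rw [this] at hd
        exact_mod_cast hd
      rw [this, ← pow_succ']
    have h2 : (1 : WithBot ℕ) < ((Pseq n w (k+1)) ^ n).degree := by
      rw [hdeg]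
      exact_mod_cast Nat.one_lt_pow (by omega) (by omega)
    have hlt : (C ((n : R) ^ (n * cseq n (k+1))) * X).degree < ((Pseq n w (k+1)) ^ n).degree := by
      refine lt_of_le_of_lt ?_ h2
      calc (C ((n : R) ^ (n * cseq n (k+1))) * X).degree
          ≤ (C ((n : R) ^ (n * cseq n (k+1)))).degree + X.degree := degree_mul_le _ _
        _ ≤ 0 + 1 := add_le_add degree_C_le degree_X_le
        _ = 1 := by simp
    exact ⟨hpow.add_of_left hlt, by
      rw [Pseq, degree_add_eq_left_of_degree_lt hlt, hdeg]⟩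

private lemma Qseq_eval (n : ℕ) (hn : 2 ≤ n) (b : ℂ) (g : ℂ → ℂ)
    (hg : g = fun z : ℂ => (z ^ n + b) / n) (w : ℂ) (k : ℕ) :
    (Qseq n b k).eval w = (n : ℂ) ^ (cseq n k) * g^[k] w := by
  have hn0 : (n : ℂ) ≠ 0 := by exact_mod_cast (by omega : n ≠ 0)
  induction k with
  | zero => simp [Qseq, cseq]
  | succ k ih =>
    have hgit : g^[k+1] w = ((g^[k] w) ^ n + b) / n := by
      rw [Function.iterate_succ_apply', hg]
    show ((Qseq n b k) ^ n + C ((n : ℂ) ^ (n * cseq n k) * b)).eval w = _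
    rw [eval_add, eval_pow, eval_C, ih, hgit]
    show _ = (n : ℂ) ^ (n * cseq n k + 1) * _
    field_simp
    ring

private lemma Pseq_eval (n : ℕ) (hn : 2 ≤ n) (b : ℂ) (g : ℂ → ℂ)
    (hg : g = fun z : ℂ => (z ^ n + b) / n) (w : ℂ) (k : ℕ) :
    (Pseq n w k).eval b = (n : ℂ) ^ (cseq n k) * g^[k] w := by
  have hn0 : (n : ℂ) ≠ 0 := by exact_mod_cast (by omega : n ≠ 0)
  induction k with
  | zero => simp [Pseq, cseq]
  | succ k ih =>
    have hgit : g^[k+1] w = ((g^[k] w) ^ n + b) / n := by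
      rw [Function.iterate_succ_apply', hg]
    show ((Pseq n w k) ^ n + C ((n : ℂ) ^ (n * cseq n k)) * X).eval b = _
    rw [eval_add, eval_pow, eval_mul, eval_C, eval_X, ih, hgit]
    show _ = (n : ℂ) ^ (n * cseq n k + 1) * _
    field_simp
    ring

theorem stmt5 (n : ℕ) (hn : 2 ≤ n) (b : ℂ) (g : ℂ → ℂ)
    (hg : g = fun z : ℂ => (z ^ n + b) / n)
    (w : ℂ) (h : ℕ) (hh : 1 ≤ h) (hper : g^[h] w = w) :
    IsIntegral ↥(Algebra.adjoin ℤ ({b} : Set ℂ)) w ∧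
      IsIntegral ↥(Algebra.adjoin ℤ ({w} : Set ℂ)) b := by
  obtain ⟨h', rfl⟩ : ∃ h', h = h' + 1 := ⟨h - 1, by omega⟩
  constructor
  · set R := Algebra.adjoin ℤ ({b} : Set ℂ) with hR
    have hbR : b ∈ R := Algebra.subset_adjoin (Set.mem_singleton b)
    set b' : R := ⟨b, hbR⟩ with hb'
    refine ⟨Qseq n b' (h'+1) - C ((n : R) ^ (cseq n (h'+1))) * X, ?_, ?_⟩
    · obtain ⟨hm, hd⟩ := Qseq_monic n hn b' (h'+1)
      have h2 : (1 : WithBot ℕ) < (Qseq n b' (h'+1)).degree := by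
        rw [hd]
        exact_mod_cast Nat.one_lt_pow (by omega) (by omega)
      have hlt : (-(C ((n : R) ^ (cseq n (h'+1))) * X)).degree < (Qseq n b' (h'+1)).degree := by
        rw [degree_neg]
        refine lt_of_le_of_lt ?_ h2
        calc (C ((n : R) ^ (cseq n (h'+1))) * X).degree
            ≤ _ + _ := degree_mul_le _ _
          _ ≤ 0 + 1 := add_le_add degree_C_le degree_X_le
          _ = 1 := by simp
      have := hm.add_of_left hlt
      simpa [sub_eq_add_neg] using this
    · have hmap : aeval w (Qseq n b' (h'+1)) = (Qseq n b (h'+1)).eval w := by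
        rw [aeval_def, eval₂_eq_eval_map, Qseq_map]
        rfl
      have key : aeval w (Qseq n b' (h'+1) - C ((n : R) ^ (cseq n (h'+1))) * X) = 0 := by
        rw [map_sub, hmap, Qseq_eval n hn b g hg w, hper]
        simp
      rw [aeval_def] at key
      exact key
  · set S := Algebra.adjoin ℤ ({w} : Set ℂ) with hS
    have hwS : w ∈ S := Algebra.subset_adjoin (Set.mem_singleton w)
    set w' : S := ⟨w, hwS⟩ with hw'
    refine ⟨Pseq n w' (h'+1) - C ((n : S) ^ (cseq n (h'+1)) * w'), ?_, ?_⟩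
    · obtain ⟨hm, hd⟩ := Pseq_monic n hn w' h'
      have h1 : (0 : WithBot ℕ) < (Pseq n w' (h'+1)).degree := by
        rw [hd]
        exact_mod_cast Nat.pow_pos (n := h') (by omega)
      have hlt : (-(C ((n : S) ^ (cseq n (h'+1)) * w'))).degree < (Pseq n w' (h'+1)).degree := by
        rw [degree_neg]
        exact lt_of_le_of_lt degree_C_le h1
      have := hm.add_of_left hlt
      simpa [sub_eq_add_neg] using this
    · have hmap : aeval b (Pseq n w' (h'+1)) = (Pseq n w (h'+1)).eval b := by
        rw [aeval_def, eval₂_eq_eval_map, Pseq_map]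
        rfl
      have key : aeval b (Pseq n w' (h'+1) - C ((n : S) ^ (cseq n (h'+1)) * w')) = 0 := by
        rw [map_sub, hmap, Pseq_eval n hn b g hg w, hper]
        simp [show (algebraMap ↥S ℂ) w' = w from rfl]
      rw [aeval_def] at key
      exact key
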